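/- Let m, n be coprime positive integers with m < n. For every j with 2 ≤ j ≤ m, the identity z_1^j = z_0^(j⌈n/m⌉ - ⌈nj/m⌉) · z_j holds in the Laurent polynomial ring, where z_j is as defined. In particular the exponent j⌈n/m⌉ - ⌈nj/m⌉ is a nonnegative integer. -/

import Mathlib

/-- The ceiling `⌈jn/m⌉` with the paper's convention `⌈0⌉ = 1`. -/
noncomputable def paperCeil (m n j : ℕ) : ℤ :=
  if j = 0 then 1 else ⌈(j * n : ℚ) / (m : ℚ)⌉

private lemma zpow_add_nonneg {K : Type*} [Field K] (x : K) {a b : ℤ}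
    (ha : 0 ≤ a) (hb : 0 ≤ b) : x ^ (a + b) = x ^ a * x ^ b := by
  lift a to ℕ using ha
  lift b to ℕ using hb
  rw [← Nat.cast_add, zpow_natCast, zpow_natCast, zpow_natCast, pow_add]

/-- The monomial identities of type `(0, 1)` on the chart `U₁`:
`z_1^j = z_0^(j⌈n/m⌉ - ⌈nj/m⌉) · z_j` for `2 ≤ j ≤ m`, where
`z_j = x₀^(m⌈jn/m⌉ - jn) x₂^j x₁^(-⌈jn/m⌉)`; in particular the exponent
`j⌈n/m⌉ - ⌈nj/m⌉` is nonnegative. -/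
theorem U1_type_zero_one_relations (m n : ℕ) (hm : 0 < m) (hn : 0 < n)
    (hcop : Nat.Coprime m n) (hmn : m < n)
    (K : Type*) [Field K] (x0 x1 x2 : K) (hx1 : x1 ≠ 0)
    (z : ℕ → K)
    (hz : ∀ j, z j =
      x0 ^ ((m : ℤ) * paperCeil m n j - j * n) * x2 ^ (j : ℤ) * x1 ^ (-(paperCeil m n j)))
    (j : ℕ) (hj2 : 2 ≤ j) (hjm : j ≤ m) :
    0 ≤ (j : ℤ) * paperCeil m n 1 - paperCeil m n j ∧
      z 1 ^ j = z 0 ^ ((j : ℤ) * paperCeil m n 1 - paperCeil m n j) * z j := by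
  have hmQ : (0 : ℚ) < (m : ℚ) := by exact_mod_cast hm
  set c1 : ℤ := paperCeil m n 1 with hc1
  set cj : ℤ := paperCeil m n j with hcj
  have hc1' : c1 = ⌈(1 * n : ℚ) / (m : ℚ)⌉ := by simp [hc1, paperCeil]
  have hcj' : cj = ⌈(j * n : ℚ) / (m : ℚ)⌉ := by
    simp only [hcj, paperCeil, if_neg (show j ≠ 0 by omega)]
  -- nonnegativity of the x0-exponents
  have h1 : (n : ℤ) ≤ m * c1 := by
    have := Int.le_ceil ((1 * n : ℚ) / (m : ℚ))
    rw [← hc1'] at this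
    rw [div_le_iff₀ hmQ] at this
    exact_mod_cast (by linarith : (n : ℚ) ≤ (m : ℚ) * c1)
  have h2 : (j : ℤ) * n ≤ m * cj := by
    have := Int.le_ceil ((j * n : ℚ) / (m : ℚ))
    rw [← hcj'] at this
    rw [div_le_iff₀ hmQ] at this
    exact_mod_cast (by linarith : ((j : ℚ) * n) ≤ (m : ℚ) * cj)
  -- the key inequality cj ≤ j * c1
  have h3 : cj ≤ (j : ℤ) * c1 := by
    rw [hcj']
    apply Int.ceil_le.mpr
    have hle : (n : ℚ) / (m : ℚ) ≤ (c1 : ℚ) := by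
      have := Int.le_ceil ((1 * n : ℚ) / (m : ℚ))
      rw [← hc1'] at this
      simpa using this
    have hj0 : (0 : ℚ) ≤ (j : ℚ) := by positivity
    calc (j * n : ℚ) / (m : ℚ) = (j : ℚ) * ((n : ℚ) / (m : ℚ)) := by ring
      _ ≤ (j : ℚ) * (c1 : ℚ) := by
          exact mul_le_mul_of_nonneg_left hle hj0
      _ = (((j : ℤ) * c1 : ℤ) : ℚ) := by push_cast; ring
  have he : 0 ≤ (j : ℤ) * c1 - cj := by omega
  refine ⟨he, ?_⟩
  set e : ℤ := (j : ℤ) * c1 - cj with hedef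
  have hz0 : z 0 = x0 ^ (m : ℤ) * x1 ^ (-1 : ℤ) := by
    rw [hz 0]; simp [paperCeil]
  have hz1 : z 1 = x0 ^ ((m : ℤ) * c1 - n) * x2 ^ (1 : ℤ) * x1 ^ (-c1) := by
    rw [hz 1]; push_cast; rw [← hc1]; ring_nf
  rw [hz1, hz0, hz j]
  rw [mul_pow, mul_pow]
  rw [← zpow_natCast (x0 ^ ((m : ℤ) * c1 - n)) j, ← zpow_mul,
    ← zpow_natCast (x2 ^ (1 : ℤ)) j, ← zpow_mul,
    ← zpow_natCast (x1 ^ (-c1)) j, ← zpow_mul]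
  rw [mul_zpow, ← zpow_mul, ← zpow_mul]
  -- now everything is a product of zpows; group and compare exponents
  have hx0 : x0 ^ (((m : ℤ) * c1 - n) * j) =
      x0 ^ ((m : ℤ) * e) * x0 ^ ((m : ℤ) * cj - j * n) := by
    rw [← zpow_add_nonneg x0 (by nlinarith) (by omega)]
    congr 1
    rw [hedef]; ring
  have hx1' : x1 ^ ((-c1) * j) = x1 ^ ((-1 : ℤ) * e) * x1 ^ (-cj) := by
    rw [← zpow_add₀ hx1]
    congr 1
    rw [hedef]; ring
  have hx2 : x2 ^ ((1 : ℤ) * j) = x2 ^ (j : ℤ) := by rw [one_mul]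
  rw [hx0, hx1', hx2]
  ring
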